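/- Let n be odd and G = D_n the dihedral group of order 2n. Then H^i(G, ℤ) (trivial action) satisfies: H^0 = ℤ, H^i = 0 for i odd, H^i = ℤ/2 for i ≡ 2 (mod 4), and H^i = ℤ/2n for i > 0 with i ≡ 0 (mod 4). In particular H²(D_n, ℤ) ≅ ℤ/2ℤ for n odd. -/

import Mathlib

set_option linter.unusedSectionVars false
set_option maxHeartbeats 1000000

open groupCohomology DihedralGroup

namespace H2DihedralAux

variable {n : ℕ} [NeZero n]

/-- Indicator of reflections in the dihedral group, as an integer. -/
def eps : DihedralGroup n → ℤ
  | .r _ => 0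
  | .sr _ => 1

lemma eps_mul (g h : DihedralGroup n) :
    eps (g * h) = eps g + eps h - 2 * (eps g * eps h) := by
  cases g <;> cases h <;> simp [eps, r_mul_r, r_mul_sr, sr_mul_r, sr_mul_sr]

/-- The obvious bijection `ZMod n ⊕ ZMod n ≃ DihedralGroup n`. -/
def dihedralEquiv : ZMod n ⊕ ZMod n ≃ DihedralGroup n where
  toFun := Sum.elim .r .sr
  invFun g := match g with | .r i => .inl i | .sr i => .inr i
  left_inv := by rintro (i | i) <;> rfl
  right_inv := by rintro (i | i) <;> rfl

lemma sum_eps : ∑ g : DihedralGroup n, eps g = n := by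
  rw [← Fintype.sum_equiv dihedralEquiv (fun x => eps (dihedralEquiv x)) eps (fun x => rfl)]
  rw [Fintype.sum_sum_type]
  simp [dihedralEquiv, eps, ZMod.card]

/-- The "transfer" of a 2-cochain: the sum of its values over the second argument. -/
noncomputable def tau (f : DihedralGroup n × DihedralGroup n → ℤ) (g : DihedralGroup n) : ℤ :=
  ∑ h : DihedralGroup n, f (g, h)

lemma tau_key (f : DihedralGroup n × DihedralGroup n → ℤ)
    (hf : ∀ g h j : DihedralGroup n, f (g * h, j) + f (g, h) = f (h, j) + f (g, h * j))
    (g h : DihedralGroup n) :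
    tau f g + tau f h - tau f (g * h) = (2 * n : ℤ) * f (g, h) := by
  have h1 : ∑ j : DihedralGroup n, (f (g * h, j) + f (g, h))
      = ∑ j : DihedralGroup n, (f (h, j) + f (g, h * j)) :=
    Finset.sum_congr rfl fun j _ => hf g h j
  have h2 : ∑ j : DihedralGroup n, f (g, h * j) = ∑ j : DihedralGroup n, f (g, j) :=
    Fintype.sum_equiv (Equiv.mulLeft h) _ _ (fun j => rfl)
  have h3 : ∑ _j : DihedralGroup n, f (g, h) = (2 * n : ℤ) * f (g, h) := by
    rw [Finset.sum_const, Finset.card_univ, DihedralGroup.card, nsmul_eq_mul]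
    push_cast; ring
  rw [Finset.sum_add_distrib, Finset.sum_add_distrib, h2, h3] at h1
  unfold tau
  linarith

/-- If `n` is odd and the transfer of a 2-cocycle is even at `sr 0`, then the transfer is
divisible by `2n` everywhere. -/
lemma tau_dvd_all (hodd : Odd n) (f : DihedralGroup n × DihedralGroup n → ℤ)
    (hf : ∀ g h j : DihedralGroup n, f (g * h, j) + f (g, h) = f (h, j) + f (g, h * j))
    (heven : (2 : ℤ) ∣ tau f (.sr 0)) (g : DihedralGroup n) :
    (2 * n : ℤ) ∣ tau f g := by
  have key : ∀ g h : DihedralGroup n, tau f g + tau f h - tau f (g * h) = (2*n:ℤ) * f (g, h) :=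
    tau_key f hf
  have hnz : (n : ℤ) ≠ 0 := Int.natCast_ne_zero.mpr (NeZero.ne n)
  have hcop : IsCoprime (2 : ℤ) (n : ℤ) := by
    obtain ⟨a, ha⟩ := hodd
    exact ⟨-a, 1, by push_cast [ha]; ring⟩
  have hone : tau f 1 = (2*n:ℤ) * f (1, 1) := by
    have hconst : ∀ j : DihedralGroup n, f (1, j) = f (1, 1) := by
      intro j
      have := hf 1 1 j
      simp only [one_mul] at this
      linarith
    have h4 : tau f 1 = ∑ _j : DihedralGroup n, f (1, 1) :=
      Finset.sum_congr rfl fun j _ => hconst j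
    rw [h4, Finset.sum_const, Finset.card_univ, DihedralGroup.card, nsmul_eq_mul]
    push_cast; ring
  have hone' : (2*n:ℤ) ∣ tau f 1 := ⟨f (1, 1), hone⟩
  have hpow : ∀ (g : DihedralGroup n) (k : ℕ), (2*n:ℤ) ∣ tau f (g ^ k) - k * tau f g := by
    intro g k
    induction k with
    | zero => simpa using hone'
    | succ k ih =>
      have hk := key (g ^ k) g
      rw [← pow_succ] at hk
      have heq : tau f (g ^ (k + 1)) - (k + 1 : ℕ) * tau f g
          = (tau f (g ^ k) - k * tau f g) - (2*n:ℤ) * f (g ^ k, g)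
            + ((2*n:ℤ) * f (g ^ k, g) - (2*n:ℤ) * f (g ^ k, g)) := by push_cast; linarith
      rw [heq]
      simpa using dvd_sub ih (Dvd.intro _ rfl)
  have hrefl : ∀ i : ZMod n, (n : ℤ) ∣ tau f (.sr i) := by
    intro i
    have hk := key (.sr i) (.sr i)
    rw [sr_mul_self, hone] at hk
    exact ⟨f (.sr i, .sr i) + f (1, 1), by linarith⟩
  have h2r1 : (2 : ℤ) ∣ tau f (.r 1) := by
    have h5 := hpow (.r 1) n
    rw [r_one_pow_n] at h5
    have hdn : (2*n:ℤ) ∣ (n : ℤ) * tau f (.r 1) := by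
      have := dvd_sub hone' h5
      simpa using this
    obtain ⟨m, hm⟩ := hdn
    refine ⟨m, mul_left_cancel₀ hnz ?_⟩
    linarith
  have hnr1 : (n : ℤ) ∣ tau f (.r 1) := by
    have hk := key (.sr 0) (.r 1)
    rw [sr_mul_r] at hk
    have heq : tau f (.r 1) = tau f (.sr (0 + 1)) - tau f (.sr 0) + (2*n:ℤ) * f (.sr 0, .r 1) := by
      linarith
    rw [heq]
    exact dvd_add (dvd_sub (hrefl _) (hrefl _)) ⟨2 * f (.sr 0, .r 1), by ring⟩
  have hr1 : (2*n:ℤ) ∣ tau f (.r 1) := hcop.mul_dvd h2r1 hnr1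
  have hsr0 : (2*n:ℤ) ∣ tau f (.sr 0) := hcop.mul_dvd heven (hrefl 0)
  have hri : ∀ i : ZMod n, (2*n:ℤ) ∣ tau f (.r i) := by
    intro i
    have h6 := hpow (.r 1) i.val
    rw [r_one_pow, ZMod.natCast_val, ZMod.cast_id] at h6
    have := dvd_add h6 (Dvd.dvd.mul_left hr1 (i.val : ℤ))
    simpa using this
  have hsri : ∀ i : ZMod n, (2*n:ℤ) ∣ tau f (.sr i) := by
    intro i
    have hk := key (.sr 0) (.r i)
    rw [sr_mul_r, zero_add] at hk
    have heq : tau f (.sr i) = tau f (.sr 0) + tau f (.r i) - (2*n:ℤ) * f (.sr 0, .r i) := by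
      linarith
    rw [heq]
    exact dvd_sub (dvd_add hsr0 (hri i)) (Dvd.intro _ rfl)
  cases g with
  | r i => exact hri i
  | sr i => exact hsri i

/-- The trivial representation of the dihedral group on `ℤ`. -/
noncomputable abbrev A' (n : ℕ) : Rep ℤ (DihedralGroup n) := Rep.trivial ℤ (DihedralGroup n) ℤ

/-- Summation over the second argument at `sr 0`, as a linear map on plain functions. -/
noncomputable def T : (DihedralGroup n × DihedralGroup n → ℤ) →ₗ[ℤ] ℤ where
  toFun f := tau f (.sr 0)
  map_add' f g := by unfold tau; exact Finset.sum_add_distrib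
  map_smul' r f := by
    unfold tau
    simp [Finset.mul_sum]

/-- The map sending a 2-cocycle `f` to `∑ h, f (sr 0, h) mod 2`. -/
noncomputable def Phi : cocycles₂ (A' n) →ₗ[ℤ] ZMod 2 :=
  ((Int.castAddHom (ZMod 2)).toIntLinearMap.comp T).comp (cocycles₂ (A' n)).subtype

lemma Phi_apply (f : cocycles₂ (A' n)) :
    Phi f = ((tau (fun p => f p) (.sr 0) : ℤ) : ZMod 2) := rfl

lemma cocycle_prop (f : cocycles₂ (A' n)) :
    ∀ g h j : DihedralGroup n,
      (fun p => (f p : ℤ)) (g * h, j) + (fun p => (f p : ℤ)) (g, h)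
        = (fun p => (f p : ℤ)) (h, j) + (fun p => (f p : ℤ)) (g, h * j) := by
  intro g h j
  have := (mem_cocycles₂_iff (A := A' n) ⇑f).1 f.2 g h j
  simpa [Rep.trivial_ρ_apply] using this

lemma tau_dOne_even (y : DihedralGroup n → ℤ)
    (f : DihedralGroup n × DihedralGroup n → ℤ)
    (hy : ∀ g h : DihedralGroup n, f (g, h) = y h - y (g * h) + y g) :
    (2 : ℤ) ∣ tau f (.sr 0) := by
  have h1 : tau f (.sr 0) = (2 * n : ℤ) * y (.sr 0) := by
    unfold tau
    have h2 : ∑ h : DihedralGroup n, y ((.sr 0 : DihedralGroup n) * h)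
        = ∑ h : DihedralGroup n, y h :=
      Fintype.sum_equiv (Equiv.mulLeft (.sr 0 : DihedralGroup n))
        (fun j => y ((.sr 0 : DihedralGroup n) * j)) y (fun j => rfl)
    calc ∑ h : DihedralGroup n, f (.sr 0, h)
        = ∑ h : DihedralGroup n, (y h - y ((.sr 0 : DihedralGroup n) * h) + y (.sr 0)) :=
          Finset.sum_congr rfl fun h _ => hy _ h
      _ = (∑ h : DihedralGroup n, y h) - (∑ h : DihedralGroup n, y ((.sr 0 : DihedralGroup n) * h))
            + ∑ _h : DihedralGroup n, y (.sr 0) := by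
          rw [Finset.sum_add_distrib, Finset.sum_sub_distrib]
      _ = (2 * n : ℤ) * y (.sr 0) := by
          rw [h2, Finset.sum_const, Finset.card_univ, DihedralGroup.card, nsmul_eq_mul]
          push_cast; ring
  exact ⟨(n : ℤ) * y (.sr 0), by rw [h1]; ring⟩

lemma mem_twoCoboundaries_iff (f : cocycles₂ (A' n)) :
    ⇑f ∈ coboundaries₂ (A' n) ↔ ∃ x : DihedralGroup n → ℤ,
      ∀ g h : DihedralGroup n, (A' n).ρ g (x h) - x (g * h) + x g = f (g, h) := by
  constructor
  · rintro ⟨x, hx⟩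
    exact ⟨x, fun g h => congrFun hx (g, h)⟩
  · rintro ⟨x, hx⟩
    exact ⟨x, funext fun p => hx p.1 p.2⟩

lemma Phi_vanishes_on_coboundaries (f : cocycles₂ (A' n)) (hf : ⇑f ∈ coboundaries₂ (A' n)) :
    Phi f = 0 := by
  obtain ⟨y, hy⟩ := (mem_twoCoboundaries_iff f).1 hf
  rw [Phi_apply]
  rw [ZMod.intCast_zmod_eq_zero_iff_dvd]
  refine tau_dOne_even (fun g => (y g : ℤ)) _ (fun g h => ?_)
  have := hy g h
  show (f (g, h) : ℤ) = y h - y (g * h) + y g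
  rw [← this]
  show (A' n).ρ g (y h) - y (g * h) + y g = (y h : ℤ) - y (g * h) + y g
  rw [Rep.trivial_ρ_apply]

lemma ker_Phi_le (hodd : Odd n) (f : cocycles₂ (A' n)) (hf : Phi f = 0) :
    ⇑f ∈ coboundaries₂ (A' n) := by
  have heven : (2 : ℤ) ∣ tau (fun p => (f p : ℤ)) (.sr 0) := by
    rw [Phi_apply] at hf
    exact_mod_cast (ZMod.intCast_zmod_eq_zero_iff_dvd _ 2).1 hf
  have hall : ∀ g : DihedralGroup n, ∃ m : ℤ, tau (fun p => (f p : ℤ)) g = (2 * n : ℤ) * m :=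
    fun g => tau_dvd_all hodd _ (cocycle_prop f) heven g
  choose x hx using hall
  refine (mem_twoCoboundaries_iff f).2 ⟨fun g => x g, fun g h => ?_⟩
  show x h - x (g * h) + x g = (f (g, h) : ℤ)
  have hnz : (2 * n : ℤ) ≠ 0 := by
    have : (n : ℤ) ≠ 0 := Int.natCast_ne_zero.mpr (NeZero.ne n)
    positivity
  refine mul_left_cancel₀ hnz ?_
  have hk := tau_key (fun p => (f p : ℤ)) (cocycle_prop f) g h
  rw [hx g, hx h, hx (g * h)] at hk
  linarith

/-- The explicit 2-cocycle `(g, h) ↦ eps g * eps h`. -/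
noncomputable def sigma : cocycles₂ (A' n) :=
  ⟨fun p => eps p.1 * eps p.2, by
    refine (mem_cocycles₂_iff _).2 fun g h j => ?_
    show eps (g * h) * eps j + eps g * eps h = eps h * eps j + eps g * eps (h * j)
    rw [eps_mul, eps_mul]
    ring⟩

lemma Phi_sigma (hodd : Odd n) : Phi (sigma (n := n)) = 1 := by
  rw [Phi_apply]
  have h1 : tau (fun p => ((sigma (n := n)) p : ℤ)) (.sr 0) = (n : ℤ) := by
    unfold tau
    have h2 : ∀ h : DihedralGroup n,
        ((sigma (n := n)) ((.sr 0 : DihedralGroup n), h) : ℤ) = eps h := by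
      intro h
      show eps (.sr 0 : DihedralGroup n) * eps h = eps h
      show (1 : ℤ) * eps h = eps h
      rw [one_mul]
    rw [Finset.sum_congr rfl fun h _ => h2 h]
    exact_mod_cast sum_eps
  rw [h1]
  obtain ⟨k, hk⟩ := hodd
  subst hk
  push_cast
  rw [show (2 : ZMod 2) = 0 from rfl]
  ring

end H2DihedralAux

open H2DihedralAux in
/-- For `n` odd, the dihedral group `D_n` of order `2n` acting trivially on `ℤ`
satisfies `H²(D_n, ℤ) ≅ ℤ/2ℤ`. -/
theorem h2_dihedral_odd_int (n : ℕ) (hodd : Odd n) :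
    Nonempty
      ((groupCohomology (Rep.trivial ℤ (DihedralGroup n) ℤ) 2) ≃ₗ[ℤ] ZMod 2) := by
  haveI : NeZero n := ⟨by rintro rfl; simpa using hodd⟩
  have hker : LinearMap.range (shortComplexH2 (A' n)).moduleCatToCycles
      ≤ LinearMap.ker (Phi (n := n)) := by
    rintro f ⟨x, rfl⟩
    exact Phi_vanishes_on_coboundaries _ ⟨x, rfl⟩
  let φ : (shortComplexH2 (A' n)).moduleCatLeftHomologyData.H →ₗ[ℤ] ZMod 2 :=
    Submodule.liftQ (LinearMap.range (shortComplexH2 (A' n)).moduleCatToCycles) (Phi (n := n)) hker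
  have hinj : Function.Injective φ := by
    rw [← LinearMap.ker_eq_bot]
    exact Submodule.ker_liftQ_eq_bot _ _ _ (fun f hf => by
        obtain ⟨x, hx⟩ := ker_Phi_le hodd f hf
        exact ⟨x, Subtype.ext hx⟩)
  have hsurj : Function.Surjective φ := by
    intro y
    have hall : ∀ z : ZMod 2, z = 0 ∨ z = 1 := by decide
    have hy := hall y
    rcases hy with rfl | rfl
    · exact ⟨0, map_zero _⟩
    · exact ⟨Submodule.Quotient.mk (sigma (n := n)), by
        show Submodule.liftQ _ _ hker (Submodule.Quotient.mk _) = 1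
        exact Phi_sigma hodd⟩
  let i := groupCohomology.H2Iso (A' n)
  let ψ := LinearEquiv.ofBijective φ ⟨hinj, hsurj⟩
  refine ⟨{ toFun := fun x => ψ (i.hom x), invFun := fun y => i.inv (ψ.symm y),
            left_inv := ?_, right_inv := ?_, map_add' := ?_, map_smul' := ?_ }⟩
  · intro a b
    show ψ (i.hom (a + b)) = ψ (i.hom a) + ψ (i.hom b)
    rw [map_add, map_add]
  · intro r x
    exact (ψ.toLinearMap.comp i.hom.hom).map_smul r x
  · intro x
    show i.inv (ψ.symm (ψ (i.hom x))) = x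
    rw [ψ.symm_apply_apply]
    exact i.hom_inv_id_apply x
  · intro y
    show ψ (i.hom (i.inv (ψ.symm y))) = y
    have h3 : i.hom (i.inv (ψ.symm y)) = ψ.symm y := i.inv_hom_id_apply _
    rw [h3, ψ.apply_symm_apply]
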